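/- For every t ≥ 0 one has the chain of equalities leb(A_t \ A) = leb(A) − leb(A_t ∩ A) = leb(A \ A_t) = ∫_{-t}^0 (d(s) − b) ds, and in particular leb(A) = ∫_{-∞}^0 (d(s) − b) ds < ∞. -/

import Mathlib

open MeasureTheory Set Filter ENNReal

private lemma vol_slices {S : Set (ℝ × ℝ)} (hS : MeasurableSet S)
    {I : Set ℝ} (hI : MeasurableSet I) (f : ℝ → ℝ≥0∞)
    (h : ∀ y : ℝ, volume {x : ℝ | (x, y) ∈ S} = I.indicator f y) :
    volume S = ∫⁻ y in I, f y := by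
  rw [Measure.volume_eq_prod, Measure.prod_apply_symm hS, ← lintegral_indicator hI]
  exact lintegral_congr fun y => h y

private lemma shift_lintegral (F : ℝ → ℝ≥0∞) (t : ℝ) {I J : Set ℝ}
    (hI : MeasurableSet I) (hJ : MeasurableSet J)
    (h : ∀ y : ℝ, y ∈ I ↔ y - t ∈ J) :
    ∫⁻ y in I, F (y - t) = ∫⁻ u in J, F u := by
  rw [← lintegral_indicator hI, ← lintegral_indicator hJ,
    ← lintegral_sub_right_eq_self (J.indicator F) t]
  refine lintegral_congr fun y => ?_
  by_cases hy : y ∈ I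
  · rw [Set.indicator_of_mem hy, Set.indicator_of_mem ((h y).1 hy)]
  · rw [Set.indicator_of_notMem hy, Set.indicator_of_notMem (fun hc => hy ((h y).2 hc))]

/-- For every `t ≥ 0`, one has
`leb(A_t \ A) = leb(A) − leb(A_t ∩ A) = leb(A \ A_t) = ∫_{-t}^0 (d s − b) ds`,
and in particular `leb(A) = ∫_{-∞}^0 (d s − b) ds < ∞`. -/
theorem trawl_increment_area
    (b : ℝ) (hb : b ∈ Set.Icc (0:ℝ) 1)
    (d : ℝ → ℝ)
    (hd_cont : ContinuousOn d (Set.Iic 0))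
    (hd_mono : MonotoneOn d (Set.Iic 0))
    (hd_range : ∀ s ≤ (0:ℝ), d s ∈ Set.Icc b 1)
    (hd0 : d 0 = 1)
    (hd_lim : Filter.Tendsto d Filter.atBot (nhds b))
    (hd_int : MeasureTheory.IntegrableOn (fun s => d s - b) (Set.Iic 0))
    (A : ℝ → Set (ℝ × ℝ))
    (hA : ∀ t, A t = {p : ℝ × ℝ | p.2 ≤ t ∧ b ≤ p.1 ∧ p.1 < d (p.2 - t)}) :
    (∀ t ≥ (0:ℝ),
      volume (A t \ A 0) = volume (A 0) - volume (A t ∩ A 0) ∧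
      volume (A t \ A 0) = volume (A 0 \ A t) ∧
      volume (A t \ A 0) = ENNReal.ofReal (∫ s in Set.Ioc (-t) 0, (d s - b))) ∧
    volume (A 0) = ENNReal.ofReal (∫ s in Set.Iic 0, (d s - b)) ∧
    volume (A 0) < ⊤ := by
  -- the monotone global extension of `d`
  have hg_mono : Monotone (fun s => d (min s 0)) := fun x y hxy =>
    hd_mono (min_le_right x 0) (min_le_right y 0) (min_le_min hxy le_rfl)
  set g : ℝ → ℝ := fun s => d (min s 0) with hgdef
  have hg_meas : Measurable g := hg_mono.measurable
  have hg_eq : ∀ s ≤ (0:ℝ), g s = d s := fun s hs => by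
    simp only [hgdef, min_eq_left hs]
  have hgb : ∀ s, b ≤ g s := fun s => (hd_range _ (min_le_right s 0)).1
  set F : ℝ → ℝ≥0∞ := fun s => ENNReal.ofReal (g s - b) with hFdef
  have hF_meas : Measurable F := ENNReal.measurable_ofReal.comp (hg_meas.sub measurable_const)
  have hA' : ∀ t, A t = {p : ℝ × ℝ | p.2 ≤ t ∧ b ≤ p.1 ∧ p.1 < g (p.2 - t)} := by
    intro t; rw [hA t]; ext p
    simp only [Set.mem_setOf_eq, hgdef]
    constructor
    · rintro ⟨h1, h2, h3⟩
      exact ⟨h1, h2, by rwa [min_eq_left (by linarith)]⟩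
    · rintro ⟨h1, h2, h3⟩
      exact ⟨h1, h2, by rwa [min_eq_left (by linarith)] at h3⟩
  have hAmeas : ∀ t, MeasurableSet (A t) := by
    intro t; rw [hA' t]
    have h1 : MeasurableSet {p : ℝ × ℝ | p.2 ≤ t} :=
      measurableSet_le measurable_snd measurable_const
    have h2 : MeasurableSet {p : ℝ × ℝ | b ≤ p.1} :=
      measurableSet_le measurable_const measurable_fst
    have h3 : MeasurableSet {p : ℝ × ℝ | p.1 < g (p.2 - t)} :=
      measurableSet_lt measurable_fst (hg_meas.comp (measurable_snd.sub measurable_const))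
    simp only [Set.setOf_and]
    exact h1.inter (h2.inter h3)
  -- volume of A 0
  have hvolA0 : volume (A 0) = ∫⁻ y in Set.Iic (0:ℝ), F y := by
    refine vol_slices (hAmeas 0) measurableSet_Iic F fun y => ?_
    rw [hA' 0]
    by_cases hy : y ≤ (0:ℝ)
    · have hslice : {x : ℝ | (x, y) ∈
          {p : ℝ × ℝ | p.2 ≤ 0 ∧ b ≤ p.1 ∧ p.1 < g (p.2 - 0)}} = Set.Ico b (g y) := by
        ext x; simp [hy, Set.mem_Ico, sub_zero]
      rw [hslice, Real.volume_Ico, Set.indicator_of_mem (Set.mem_Iic.mpr hy)]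
    · have hslice : {x : ℝ | (x, y) ∈
          {p : ℝ × ℝ | p.2 ≤ 0 ∧ b ≤ p.1 ∧ p.1 < g (p.2 - 0)}} = (∅ : Set ℝ) := by
        ext x; simp [hy]
      rw [hslice, measure_empty, Set.indicator_of_notMem (by simpa using hy)]
  -- conversion of the lintegral over Iic 0 to a Bochner integral
  have hnn : ∀ᵐ s ∂(volume.restrict (Set.Iic (0:ℝ))), 0 ≤ d s - b :=
    (ae_restrict_iff' measurableSet_Iic).2
      (ae_of_all _ fun s hs => sub_nonneg.2 (hd_range s hs).1)
  have hIic_eq : ∫⁻ y in Set.Iic (0:ℝ), F y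
      = ENNReal.ofReal (∫ s in Set.Iic (0:ℝ), (d s - b)) := by
    rw [ofReal_integral_eq_lintegral_ofReal hd_int hnn]
    refine setLIntegral_congr_fun measurableSet_Iic (fun y hy => ?_)
    simp only [hFdef, hg_eq y hy]
  have hfin : ∫⁻ y in Set.Iic (0:ℝ), F y ≠ ⊤ := by
    rw [hIic_eq]; exact ENNReal.ofReal_ne_top
  have hIoc_eq : ∀ t : ℝ, ∫⁻ y in Set.Ioc (-t) (0:ℝ), F y
      = ENNReal.ofReal (∫ s in Set.Ioc (-t) 0, (d s - b)) := by
    intro t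
    have hint : MeasureTheory.IntegrableOn (fun s => d s - b) (Set.Ioc (-t) 0) :=
      hd_int.mono_set Set.Ioc_subset_Iic_self
    have hnn' : ∀ᵐ s ∂(volume.restrict (Set.Ioc (-t) (0:ℝ))), 0 ≤ d s - b :=
      (ae_restrict_iff' measurableSet_Ioc).2
        (ae_of_all _ fun s hs => sub_nonneg.2 (hd_range s hs.2).1)
    rw [ofReal_integral_eq_lintegral_ofReal hint hnn']
    refine setLIntegral_congr_fun measurableSet_Ioc (fun y hy => ?_)
    simp only [hFdef, hg_eq y hy.2]
  -- splitting Iic 0 at -t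
  have hsplit : ∀ t ≥ (0:ℝ), ∫⁻ y in Set.Iic (0:ℝ), F y
      = (∫⁻ y in Set.Iic (-t), F y) + ∫⁻ y in Set.Ioc (-t) 0, F y := by
    intro t ht
    rw [← lintegral_union measurableSet_Ioc (Set.Iic_disjoint_Ioc le_rfl),
      Set.Iic_union_Ioc_eq_Iic (by linarith : -t ≤ (0:ℝ))]
  refine ⟨?_, hvolA0.trans hIic_eq, by rw [hvolA0, hIic_eq]; exact ENNReal.ofReal_lt_top⟩
  intro t ht
  have hfin' : ∫⁻ y in Set.Iic (-t), F y ≠ ⊤ :=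
    ne_top_of_le_ne_top hfin (lintegral_mono_set (Set.Iic_subset_Iic.2 (by linarith)))
  -- shift identities
  have hs1 : ∫⁻ y in Set.Ioc (0:ℝ) t, F (y - t) = ∫⁻ u in Set.Ioc (-t) 0, F u :=
    shift_lintegral F t measurableSet_Ioc measurableSet_Ioc fun y => by
      simp only [Set.mem_Ioc]
      constructor <;> rintro ⟨h1, h2⟩ <;> constructor <;> linarith
  have hs2 : ∫⁻ y in Set.Iic (0:ℝ), F (y - t) = ∫⁻ u in Set.Iic (-t), F u :=
    shift_lintegral F t measurableSet_Iic measurableSet_Iic fun y => by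
      simp only [Set.mem_Iic]; constructor <;> intro h <;> linarith
  -- volume of A t \ A 0
  have hD1 : volume (A t \ A 0) = ∫⁻ y in Set.Ioc (0:ℝ) t, F (y - t) := by
    refine vol_slices ((hAmeas t).diff (hAmeas 0)) measurableSet_Ioc _ fun y => ?_
    rw [hA' t, hA' 0]
    by_cases hy1 : y ≤ (0:ℝ)
    · have hslice : {x : ℝ | (x, y) ∈
          ({p : ℝ × ℝ | p.2 ≤ t ∧ b ≤ p.1 ∧ p.1 < g (p.2 - t)} \
           {p : ℝ × ℝ | p.2 ≤ 0 ∧ b ≤ p.1 ∧ p.1 < g (p.2 - 0)})} = (∅ : Set ℝ) := by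
        ext x
        simp only [Set.mem_setOf_eq, Set.mem_diff, Set.mem_empty_iff_false, iff_false]
        rintro ⟨⟨h1, h2, h3⟩, h4⟩
        exact h4 ⟨hy1, h2, lt_of_lt_of_le h3 (hg_mono (by linarith : y - t ≤ y - 0))⟩
      rw [hslice, measure_empty,
        Set.indicator_of_notMem (fun hc => (not_lt.2 hy1) hc.1)]
    · by_cases hy2 : y ≤ t
      · have hslice : {x : ℝ | (x, y) ∈
            ({p : ℝ × ℝ | p.2 ≤ t ∧ b ≤ p.1 ∧ p.1 < g (p.2 - t)} \
             {p : ℝ × ℝ | p.2 ≤ 0 ∧ b ≤ p.1 ∧ p.1 < g (p.2 - 0)})} =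
            Set.Ico b (g (y - t)) := by
          ext x
          simp only [Set.mem_setOf_eq, Set.mem_diff, Set.mem_Ico]
          constructor
          · rintro ⟨⟨_, h2, h3⟩, _⟩; exact ⟨h2, h3⟩
          · rintro ⟨h2, h3⟩; exact ⟨⟨hy2, h2, h3⟩, fun hc => hy1 hc.1⟩
        rw [hslice, Real.volume_Ico,
          Set.indicator_of_mem (Set.mem_Ioc.mpr ⟨not_le.1 hy1, hy2⟩)]
      · have hslice : {x : ℝ | (x, y) ∈
            ({p : ℝ × ℝ | p.2 ≤ t ∧ b ≤ p.1 ∧ p.1 < g (p.2 - t)} \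
             {p : ℝ × ℝ | p.2 ≤ 0 ∧ b ≤ p.1 ∧ p.1 < g (p.2 - 0)})} = (∅ : Set ℝ) := by
          ext x
          simp only [Set.mem_setOf_eq, Set.mem_diff, Set.mem_empty_iff_false, iff_false]
          rintro ⟨⟨h1, _, _⟩, _⟩; exact hy2 h1
        rw [hslice, measure_empty, Set.indicator_of_notMem (fun hc => hy2 hc.2)]
  -- volume of A t ∩ A 0
  have hInter : volume (A t ∩ A 0) = ∫⁻ y in Set.Iic (0:ℝ), F (y - t) := by
    refine vol_slices ((hAmeas t).inter (hAmeas 0)) measurableSet_Iic _ fun y => ?_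
    rw [hA' t, hA' 0]
    by_cases hy : y ≤ (0:ℝ)
    · have hslice : {x : ℝ | (x, y) ∈
          ({p : ℝ × ℝ | p.2 ≤ t ∧ b ≤ p.1 ∧ p.1 < g (p.2 - t)} ∩
           {p : ℝ × ℝ | p.2 ≤ 0 ∧ b ≤ p.1 ∧ p.1 < g (p.2 - 0)})} =
          Set.Ico b (g (y - t)) := by
        ext x
        simp only [Set.mem_setOf_eq, Set.mem_inter_iff, Set.mem_Ico]
        constructor
        · rintro ⟨⟨_, h2, h3⟩, _⟩; exact ⟨h2, h3⟩
        · rintro ⟨h2, h3⟩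
          exact ⟨⟨by linarith, h2, h3⟩,
            ⟨hy, h2, lt_of_lt_of_le h3 (hg_mono (by linarith : y - t ≤ y - 0))⟩⟩
      rw [hslice, Real.volume_Ico, Set.indicator_of_mem (Set.mem_Iic.mpr hy)]
    · have hslice : {x : ℝ | (x, y) ∈
          ({p : ℝ × ℝ | p.2 ≤ t ∧ b ≤ p.1 ∧ p.1 < g (p.2 - t)} ∩
           {p : ℝ × ℝ | p.2 ≤ 0 ∧ b ≤ p.1 ∧ p.1 < g (p.2 - 0)})} = (∅ : Set ℝ) := by
        ext x
        simp only [Set.mem_setOf_eq, Set.mem_inter_iff, Set.mem_empty_iff_false, iff_false]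
        rintro ⟨_, ⟨h1, _, _⟩⟩; exact hy h1
      rw [hslice, measure_empty, Set.indicator_of_notMem (by simpa using hy)]
  -- volume of A 0 \ A t
  have hD2 : volume (A 0 \ A t) = ∫⁻ y in Set.Iic (0:ℝ),
      ENNReal.ofReal (g y - g (y - t)) := by
    refine vol_slices ((hAmeas 0).diff (hAmeas t)) measurableSet_Iic _ fun y => ?_
    rw [hA' t, hA' 0]
    by_cases hy : y ≤ (0:ℝ)
    · have hslice : {x : ℝ | (x, y) ∈
          ({p : ℝ × ℝ | p.2 ≤ 0 ∧ b ≤ p.1 ∧ p.1 < g (p.2 - 0)} \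
           {p : ℝ × ℝ | p.2 ≤ t ∧ b ≤ p.1 ∧ p.1 < g (p.2 - t)})} =
          Set.Ico (g (y - t)) (g y) := by
        ext x
        simp only [Set.mem_setOf_eq, Set.mem_diff, Set.mem_Ico, sub_zero]
        constructor
        · rintro ⟨⟨_, h2, h3⟩, h4⟩
          refine ⟨not_lt.1 fun hc => h4 ⟨by linarith, h2, hc⟩, h3⟩
        · rintro ⟨h2, h3⟩
          exact ⟨⟨hy, le_trans (hgb _) h2, h3⟩, fun hc => absurd hc.2.2 (not_lt.2 h2)⟩
      rw [hslice, Real.volume_Ico, Set.indicator_of_mem (Set.mem_Iic.mpr hy)]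
    · have hslice : {x : ℝ | (x, y) ∈
          ({p : ℝ × ℝ | p.2 ≤ 0 ∧ b ≤ p.1 ∧ p.1 < g (p.2 - 0)} \
           {p : ℝ × ℝ | p.2 ≤ t ∧ b ≤ p.1 ∧ p.1 < g (p.2 - t)})} = (∅ : Set ℝ) := by
        ext x
        simp only [Set.mem_setOf_eq, Set.mem_diff, Set.mem_empty_iff_false, iff_false]
        rintro ⟨⟨h1, _, _⟩, _⟩; exact hy h1
      rw [hslice, measure_empty, Set.indicator_of_notMem (by simpa using hy)]
  -- rewrite the D2 lintegral as a difference of lintegrals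
  have hD2' : ∫⁻ y in Set.Iic (0:ℝ), ENNReal.ofReal (g y - g (y - t))
      = ∫⁻ u in Set.Ioc (-t) 0, F u := by
    have hptw : ∀ y : ℝ, ENNReal.ofReal (g y - g (y - t)) = F y - F (y - t) := by
      intro y
      have h1 : g y - g (y - t) = (g y - b) - (g (y - t) - b) := by ring
      rw [h1, ENNReal.ofReal_sub _ (sub_nonneg.2 (hgb _))]
    have hle : (fun y => F (y - t)) ≤ᵐ[volume.restrict (Set.Iic (0:ℝ))] F :=
      ae_of_all _ fun y => ENNReal.ofReal_le_ofReal
        (sub_le_sub_right (hg_mono (by linarith : y - t ≤ y)) b)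
    have hmeas2 : Measurable fun y : ℝ => F (y - t) :=
      hF_meas.comp (measurable_id.sub measurable_const)
    have hfin2 : ∫⁻ y in Set.Iic (0:ℝ), F (y - t) ≠ ⊤ := by
      rw [hs2]; exact hfin'
    calc ∫⁻ y in Set.Iic (0:ℝ), ENNReal.ofReal (g y - g (y - t))
        = ∫⁻ y in Set.Iic (0:ℝ), (F y - F (y - t)) := by
          exact lintegral_congr fun y => hptw y
      _ = (∫⁻ y in Set.Iic (0:ℝ), F y) - ∫⁻ y in Set.Iic (0:ℝ), F (y - t) :=
          lintegral_sub hmeas2 hfin2 hle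
      _ = ∫⁻ u in Set.Ioc (-t) 0, F u := by
          rw [hs2, hsplit t ht, ENNReal.add_sub_cancel_left hfin']
  refine ⟨?_, ?_, ?_⟩
  · rw [hD1, hs1, hvolA0, hInter, hs2, hsplit t ht, ENNReal.add_sub_cancel_left hfin']
  · rw [hD1, hs1, hD2, hD2']
  · rw [hD1, hs1, hIoc_eq t]
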